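/- With η_k defined as above (for ξ ≥ √((2+ε_k)k + 1) with σ_k(ξ) = √(ξ²−2k) and C_k = √(2^k k!)), there exists a sequence ε_k > 0 with ε_k → 0 such that η_k is strictly decreasing in ξ on [√((2+ε_k)k+1), ∞). -/

import Mathlib

open Real Filter Set

/-- `σ_k(ξ) = √(ξ² − 2k)`. -/
noncomputable def sigmaH (k : ℕ) (ξ : ℝ) : ℝ := Real.sqrt (ξ ^ 2 - 2 * k)

/-- The normalizing constant `C_k = √(2^k k!)` of physicists' Hermite
polynomials. -/
noncomputable def CH (k : ℕ) : ℝ := Real.sqrt (2 ^ k * k.factorial)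

/-- The exponent `η_k(ξ)` of the asymptotic envelope of the orthonormal
physicists' Hermite polynomial in its monotonic region. -/
noncomputable def etaH (k : ℕ) (ξ : ℝ) : ℝ :=
  1 / 2 - sigmaH k ξ / (2 * ξ) - Real.log (CH k) / ξ ^ 2 - k / (2 * ξ ^ 2)
    + k * Real.log (sigmaH k ξ + ξ) / ξ ^ 2
    + Real.log ((1 / 2) * (1 + ξ / sigmaH k ξ)) / (2 * ξ ^ 2)

/-- `log x ≤ x / e`. -/
lemma log_le_div_e_aux {x : ℝ} (hx : 0 < x) : Real.log x ≤ x / Real.exp 1 := by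
  have h := Real.log_le_sub_one_of_pos (show 0 < x / Real.exp 1 by positivity)
  rw [Real.log_div (ne_of_gt hx) (Real.exp_ne_zero 1), Real.log_exp] at h
  linarith

/-- Weak Stirling upper bound: `log k! ≤ k log k − k + (log k)/2 + 1`. -/
lemma log_factorial_le_aux (k : ℕ) (hk : 1 ≤ k) :
    Real.log (k.factorial) ≤ k * Real.log k - k + Real.log k / 2 + 1 := by
  have h1 : Real.log (Stirling.stirlingSeq k) ≤ Real.log (Stirling.stirlingSeq 1) := by
    have h := Stirling.log_stirlingSeq'_antitone (Nat.zero_le (k - 1))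
    simpa [Function.comp, Nat.succ_eq_add_one, Nat.sub_add_cancel hk] using h
  rw [Stirling.log_stirlingSeq_formula k, Stirling.stirlingSeq_one] at h1
  have hk0 : (0:ℝ) < k := by exact_mod_cast hk
  have h2 : Real.log (Real.exp 1 / Real.sqrt 2) = 1 - Real.log 2 / 2 := by
    rw [Real.log_div (Real.exp_ne_zero 1) (by positivity), Real.log_exp,
      Real.log_sqrt (by norm_num)]
  have h3 : Real.log (2 * k) = Real.log 2 + Real.log k := by
    rw [Real.log_mul (by norm_num) (ne_of_gt hk0)]
  have h4 : Real.log ((k:ℝ) / Real.exp 1) = Real.log k - 1 := by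
    rw [Real.log_div (ne_of_gt hk0) (Real.exp_ne_zero 1), Real.log_exp]
  rw [h2, h3, h4] at h1
  nlinarith [h1]

/-- The key inequality: `k + k log 2 + log k! ≤ 2k log(1 + √(2k))` for `k ≥ 1`. -/
lemma etaH_key_ineq (k : ℕ) (hk : 1 ≤ k) :
    (k:ℝ) + k * Real.log 2 + Real.log k.factorial
      ≤ 2 * k * Real.log (1 + Real.sqrt (2 * k)) := by
  have hs2 : Real.sqrt 2 ≤ 1.415 := by
    nlinarith [Real.sq_sqrt (show (0:ℝ) ≤ 2 by norm_num), Real.sqrt_nonneg 2]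
  have hs2' : (1.41:ℝ) ≤ Real.sqrt 2 := by
    nlinarith [Real.sq_sqrt (show (0:ℝ) ≤ 2 by norm_num), Real.sqrt_nonneg 2]
  have heup : Real.exp 1 ≤ 2.7182818286 := le_of_lt Real.exp_one_lt_d9
  have helo : (2.703:ℝ) ≤ Real.exp 1 := by
    have := Real.exp_one_gt_d9; linarith
  rcases lt_or_ge k 3 with h3 | h3
  · interval_cases k
    · -- k = 1 : 1 + log 2 ≤ 2 log (1 + √2)
      have h1 : Real.exp 1 * 2 ≤ (1 + Real.sqrt 2) ^ 2 := by
        nlinarith [Real.sq_sqrt (show (0:ℝ) ≤ 2 by norm_num), Real.sqrt_nonneg 2]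
      have h2 : Real.log (Real.exp 1 * 2) ≤ Real.log ((1 + Real.sqrt 2) ^ 2) :=
        Real.log_le_log (by positivity) h1
      rw [Real.log_mul (Real.exp_ne_zero 1) (by norm_num), Real.log_exp,
        Real.log_pow] at h2
      norm_num
      norm_num at h2
      linarith
    · -- k = 2 : 2 + 3 log 2 ≤ 4 log 3
      have hsq : Real.sqrt (2 * (2:ℕ)) = 2 := by
        rw [show (2 * ((2:ℕ):ℝ)) = 2 ^ 2 by norm_num, Real.sqrt_sq (by norm_num)]
      have h1 : Real.exp 1 ^ 2 * 2 ^ 3 ≤ (3:ℝ) ^ 4 := by nlinarith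
      have h2 : Real.log (Real.exp 1 ^ 2 * 2 ^ 3) ≤ Real.log ((3:ℝ) ^ 4) :=
        Real.log_le_log (by positivity) h1
      have e1 : Real.log (Real.exp 1 ^ 2 * 2 ^ 3) = 2 + 3 * Real.log 2 := by
        rw [Real.log_mul (by positivity) (by norm_num), Real.log_pow, Real.log_pow,
          Real.log_exp]
        push_cast; ring
      have e2 : Real.log ((3:ℝ) ^ 4) = 4 * Real.log 3 := by
        rw [Real.log_pow]; push_cast; ring
      rw [e1, e2] at h2
      have h4 : (1:ℝ) + Real.sqrt (2 * (2:ℕ)) = 3 := by rw [hsq]; norm_num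
      rw [show ((2:ℕ):ℝ) = 2 by norm_num] at h4 ⊢
      rw [h4]
      norm_num [Nat.factorial]
      linarith
  · -- k ≥ 3
    have hk0 : (0:ℝ) < k := by positivity
    have hk3 : (3:ℝ) ≤ k := by exact_mod_cast h3
    set u : ℝ := Real.sqrt (2 * k) with hu
    have hu0 : 0 < u := Real.sqrt_pos.2 (by positivity)
    have hu2 : u ^ 2 = 2 * k := Real.sq_sqrt (by positivity)
    set t : ℝ := Real.sqrt k with ht
    have ht0 : 0 < t := Real.sqrt_pos.2 hk0
    have ht2 : t ^ 2 = k := Real.sq_sqrt (le_of_lt hk0)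
    have h173 : (1.73:ℝ) ≤ t := by
      have ht3 : Real.sqrt 3 ≤ t := Real.sqrt_le_sqrt hk3
      refine le_trans ?_ ht3
      nlinarith [Real.sq_sqrt (show (0:ℝ) ≤ 3 by norm_num), Real.sqrt_nonneg 3]
    have hut : u = Real.sqrt 2 * t := by
      rw [hu, ht, ← Real.sqrt_mul (by norm_num)]
    have hfac := log_factorial_le_aux k hk
    -- log (1+u) ≥ log u + 1/(1+u)
    have hlog1 : Real.log u + (1 - u / (1 + u)) ≤ Real.log (1 + u) := by
      have h := Real.one_sub_inv_le_log_of_pos (show 0 < (1 + u) / u by positivity)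
      rw [Real.log_div (by positivity) (ne_of_gt hu0)] at h
      have hinv : ((1 + u) / u)⁻¹ = u / (1 + u) := by rw [inv_div]
      rw [hinv] at h
      linarith
    have hlogu : Real.log u = (Real.log 2 + Real.log k) / 2 := by
      rw [hu, Real.log_sqrt (by positivity), Real.log_mul (by norm_num) (ne_of_gt hk0)]
    have hlogk : Real.log k ≤ 2 * (t / Real.exp 1) := by
      have h1 : Real.log (k:ℝ) = 2 * Real.log t := by
        rw [ht, Real.log_sqrt (le_of_lt hk0)]; ring
      have h2 := log_le_div_e_aux ht0
      rw [h1]; linarith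
    have hLnn : 0 ≤ Real.log k := Real.log_nonneg (by linarith)
    have hL : 2.703 * Real.log k ≤ 2 * t := by
      have h1 : Real.exp 1 * Real.log k ≤ 2 * t := by
        rw [mul_comm]
        calc Real.log k * Real.exp 1 ≤ 2 * (t / Real.exp 1) * Real.exp 1 := by
              apply mul_le_mul_of_nonneg_right hlogk (le_of_lt (Real.exp_pos 1))
          _ = 2 * t := by field_simp
      nlinarith
    have hu15 : u ≤ 1.415 * t := by
      rw [hut]; exact mul_le_mul_of_nonneg_right hs2 (le_of_lt ht0)
    have hmain : Real.log k / 2 + 1 ≤ 2 * k / (1 + u) := by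
      rw [le_div_iff₀ (by positivity)]
      nlinarith [mul_le_mul hL hu15 (le_of_lt hu0) (by positivity : (0:ℝ) ≤ 2 * t),
        sq_nonneg t, sq_nonneg (t - 1.73)]
    have h1u : 2 * k * (1 - u / (1 + u)) = 2 * k / (1 + u) := by
      field_simp
      ring
    calc (k:ℝ) + k * Real.log 2 + Real.log k.factorial
        ≤ k + k * Real.log 2 + (k * Real.log k - k + Real.log k / 2 + 1) := by linarith
      _ = 2 * k * ((Real.log 2 + Real.log k) / 2) + (Real.log k / 2 + 1) := by ring
      _ ≤ 2 * k * Real.log u + 2 * k * (1 - u / (1 + u)) := by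
          rw [hlogu, h1u]; linarith
      _ = 2 * k * (Real.log u + (1 - u / (1 + u))) := by ring
      _ ≤ 2 * k * Real.log (1 + u) := by
          apply mul_le_mul_of_nonneg_left hlog1 (by positivity)

/-- The derivative of `etaH`. -/
lemma hasDerivAt_etaH (k : ℕ) (hk : 1 ≤ k) (ξ : ℝ) (hξ : 0 < ξ)
    (h2k : 2 * (k:ℝ) + 1 ≤ ξ ^ 2) :
    HasDerivAt (etaH k)
      ((2 * Real.log (CH k) + k - 2 * k * Real.log (sigmaH k ξ + ξ)
          - Real.log ((1 / 2) * (1 + ξ / sigmaH k ξ))) / ξ ^ 3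
        - (ξ - sigmaH k ξ) / (2 * (sigmaH k ξ) ^ 2 * ξ ^ 2)) ξ := by
  have hk0 : (0:ℝ) < k := by exact_mod_cast hk
  set σ : ℝ := sigmaH k ξ with hσdef
  have harg : (0:ℝ) < ξ ^ 2 - 2 * k := by linarith
  have hσ2 : σ ^ 2 = ξ ^ 2 - 2 * k := Real.sq_sqrt (le_of_lt harg)
  have hσ0 : 0 < σ := Real.sqrt_pos.2 harg
  have hσξ : σ < ξ := by nlinarith
  have hσξ0 : 0 < σ + ξ := by linarith
  have hg0 : 0 < (1 / 2) * (1 + ξ / σ) := by positivity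
  have hkk : (k:ℝ) = (ξ ^ 2 - σ ^ 2) / 2 := by linarith
  have hσd : HasDerivAt (fun x => sigmaH k x) (ξ / σ) ξ := by
    have h1 : HasDerivAt (fun x : ℝ => x ^ 2 - 2 * k) (2 * ξ) ξ := by
      simpa using (hasDerivAt_pow 2 ξ).sub_const (2 * (k:ℝ))
    have h2 := h1.sqrt (ne_of_gt harg)
    refine h2.congr_deriv ?_
    rw [show Real.sqrt (ξ ^ 2 - 2 * (k:ℝ)) = σ from rfl]
    field_simp
  have hden : HasDerivAt (fun x : ℝ => 2 * x) 2 ξ := by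
    simpa using (hasDerivAt_id ξ).const_mul (2:ℝ)
  have hden2 : HasDerivAt (fun x : ℝ => 2 * x ^ 2) (4 * ξ) ξ := by
    have := (hasDerivAt_pow 2 ξ).const_mul (2:ℝ)
    simpa using this.congr_deriv (by ring)
  have hpow : HasDerivAt (fun x : ℝ => x ^ 2) (2 * ξ) ξ := by
    simpa using hasDerivAt_pow 2 ξ
  have ht2 : HasDerivAt (fun x => sigmaH k x / (2 * x)) ((k:ℝ) / (σ * ξ ^ 2)) ξ := by
    have h := hσd.div hden (by positivity)
    refine h.congr_deriv ?_
    rw [hkk]; field_simp; ring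
  have ht3 : HasDerivAt (fun x : ℝ => Real.log (CH k) / x ^ 2)
      (-2 * Real.log (CH k) / ξ ^ 3) ξ := by
    have h := (hasDerivAt_const ξ (Real.log (CH k))).div hpow (by positivity)
    refine h.congr_deriv ?_
    field_simp; ring
  have ht4 : HasDerivAt (fun x : ℝ => (k:ℝ) / (2 * x ^ 2)) (-(k:ℝ) / ξ ^ 3) ξ := by
    have h := (hasDerivAt_const ξ ((k:ℝ))).div hden2 (by positivity)
    refine h.congr_deriv ?_
    field_simp; ring
  have ht5 : HasDerivAt (fun x => (k:ℝ) * Real.log (sigmaH k x + x) / x ^ 2)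
      ((k:ℝ) / (σ * ξ ^ 2) - 2 * k * Real.log (σ + ξ) / ξ ^ 3) ξ := by
    have hin : HasDerivAt (fun x => sigmaH k x + x) (ξ / σ + 1) ξ := hσd.add (hasDerivAt_id ξ)
    have hlog : HasDerivAt (fun x => Real.log (sigmaH k x + x)) ((ξ / σ + 1) / (σ + ξ)) ξ :=
      hin.log (ne_of_gt hσξ0)
    have h := (hlog.const_mul (k:ℝ)).div hpow (by positivity)
    refine h.congr_deriv ?_
    field_simp; ring
  have ht6 : HasDerivAt (fun x => Real.log ((1 / 2) * (1 + x / sigmaH k x)) / (2 * x ^ 2))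
      ((σ - ξ) / (2 * σ ^ 2 * ξ ^ 2)
        - Real.log ((1 / 2) * (1 + ξ / σ)) / ξ ^ 3) ξ := by
    have hdiv : HasDerivAt (fun x => x / sigmaH k x) ((1 * σ - ξ * (ξ / σ)) / σ ^ 2) ξ :=
      (hasDerivAt_id ξ).div hσd (ne_of_gt hσ0)
    have hinner : HasDerivAt (fun x => (1 / 2) * (1 + x / sigmaH k x))
        (1 / 2 * ((1 * σ - ξ * (ξ / σ)) / σ ^ 2)) ξ := by
      simpa using ((hdiv.const_add 1).const_mul (1/2 : ℝ))
    have hlog := hinner.log (ne_of_gt hg0)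
    have h := hlog.div hden2 (by positivity)
    refine h.congr_deriv ?_
    have hne : 1 + ξ / σ ≠ 0 := by positivity
    rw [← hσdef]
    generalize Real.log ((1 / 2) * (1 + ξ / σ)) = L
    field_simp
    ring
  have H := ((((hasDerivAt_const ξ ((1:ℝ)/2)).sub ht2).sub ht3).sub ht4).add ht5 |>.add ht6
  refine H.congr_deriv ?_
  field_simp
  ring

/-- There is a sequence `ε_k > 0`, `ε_k → 0`, such that `η_k` is strictly
decreasing on `[√((2+ε_k)k+1), ∞)`. -/
theorem etaH_strictAnti :
    ∃ ε : ℕ → ℝ, (∀ k, 0 < ε k) ∧ Tendsto ε atTop (nhds 0) ∧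
      ∀ k : ℕ, 1 ≤ k →
        StrictAntiOn (etaH k) (Ici (Real.sqrt ((2 + ε k) * k + 1))) := by
  refine ⟨fun k => 1 / ((k:ℝ) + 1), fun k => by positivity,
    tendsto_one_div_add_atTop_nhds_zero_nat, ?_⟩
  intro k hk
  have hk0 : (0:ℝ) < k := by exact_mod_cast hk
  set ε : ℝ := 1 / ((k:ℝ) + 1) with hε
  have hε0 : 0 < ε := by positivity
  set a : ℝ := Real.sqrt ((2 + ε) * k + 1) with ha
  have harg0 : (0:ℝ) < (2 + ε) * k + 1 := by positivity
  have ha2 : a ^ 2 = (2 + ε) * k + 1 := Real.sq_sqrt harg0.le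
  have ha0 : 0 < a := Real.sqrt_pos.2 harg0
  -- facts valid for each x ≥ a
  have hfacts : ∀ x : ℝ, a ≤ x → 0 < x ∧ 2 * (k:ℝ) + 1 ≤ x ^ 2 := by
    intro x hx
    have hx0 : 0 < x := lt_of_lt_of_le ha0 hx
    have hx2 : a ^ 2 ≤ x ^ 2 := by nlinarith
    constructor
    · exact hx0
    · nlinarith
  apply strictAntiOn_of_deriv_neg (convex_Ici a)
  · intro x hx
    obtain ⟨hx0, h2k⟩ := hfacts x hx
    exact (hasDerivAt_etaH k hk x hx0 h2k).continuousAt.continuousWithinAt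
  · intro x hx
    rw [interior_Ici] at hx
    obtain ⟨hx0, h2k⟩ := hfacts x (le_of_lt hx)
    rw [(hasDerivAt_etaH k hk x hx0 h2k).deriv]
    set σ : ℝ := sigmaH k x with hσdef
    have harg : (0:ℝ) < x ^ 2 - 2 * k := by linarith
    have hσ2 : σ ^ 2 = x ^ 2 - 2 * k := Real.sq_sqrt (le_of_lt harg)
    have hσ0 : 0 < σ := Real.sqrt_pos.2 harg
    have hσ1 : 1 ≤ σ := by nlinarith [Real.sqrt_nonneg (x ^ 2 - 2 * (k:ℝ))]
    have hσξ : σ < x := by nlinarith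
    -- √(2k) ≤ x
    have hsq2k : Real.sqrt (2 * k) ≤ x := by
      have h1 : Real.sqrt (2 * k) ≤ Real.sqrt (x ^ 2) := Real.sqrt_le_sqrt (by linarith)
      rwa [Real.sqrt_sq hx0.le] at h1
    -- L ≥ log (1 + √(2k))
    have hL : Real.log (1 + Real.sqrt (2 * k)) ≤ Real.log (σ + x) := by
      apply Real.log_le_log (by positivity)
      linarith
    -- M ≥ 0
    have hM : 0 ≤ Real.log ((1 / 2) * (1 + x / σ)) := by
      apply Real.log_nonneg
      have h1 : 1 ≤ x / σ := (one_le_div hσ0).2 (le_of_lt hσξ)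
      linarith
    -- 2 log C_k = k log 2 + log k!
    have hC : 2 * Real.log (CH k) = k * Real.log 2 + Real.log (k.factorial) := by
      have hfac0 : (0:ℝ) < (k.factorial : ℝ) := by exact_mod_cast k.factorial_pos
      rw [CH, Real.log_sqrt (by positivity)]
      rw [Real.log_mul (by positivity) (ne_of_gt hfac0), Real.log_pow]
      ring
    -- numerator nonpositive
    have hkey := etaH_key_ineq k hk
    have hnum : 2 * Real.log (CH k) + k - 2 * k * Real.log (σ + x)
        - Real.log ((1 / 2) * (1 + x / σ)) ≤ 0 := by
      have h1 : 2 * (k:ℝ) * Real.log (1 + Real.sqrt (2 * k)) ≤ 2 * k * Real.log (σ + x) :=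
        mul_le_mul_of_nonneg_left hL (by positivity)
      rw [hC]
      linarith
    have hterm1 : (2 * Real.log (CH k) + k - 2 * k * Real.log (σ + x)
        - Real.log ((1 / 2) * (1 + x / σ))) / x ^ 3 ≤ 0 :=
      div_nonpos_iff.2 (Or.inr ⟨hnum, by positivity⟩)
    have hterm2 : 0 < (x - σ) / (2 * σ ^ 2 * x ^ 2) :=
      div_pos (by linarith) (by positivity)
    linarith
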